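/- Let l ≥ 1, θ₁,…,θ_l ∈ ℝ and p₁,…,p_l ∈ ℝ², and g_k = (R(θ_k), p_k). Suppose θ₁ + ⋯ + θ_l ≡ 0 (mod 2π), equivalently R(θ₁+⋯+θ_l) = I. Then for all 1 ≤ i < j ≤ l one has Δ^i = R_{i,j−1} Δ^j, where (R_{i,j−1}, p_{i,j−1}) is the partial product g_i ⋯ g_{j−1}; in particular the Euclidean norms of the cycle displacements agree: ‖Δ^i‖ = ‖Δ^j‖ for all 1 ≤ i, j ≤ l. -/

import Mathlib

/-- The 2×2 rotation matrix `R(θ)`. -/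
noncomputable def Rot (θ : ℝ) : Matrix (Fin 2) (Fin 2) ℝ :=
  !![Real.cos θ, -Real.sin θ; Real.sin θ, Real.cos θ]

/-- An element of `SE(2)`: a pair of a 2×2 matrix (rotation part) and a translation in ℝ². -/
abbrev SE2 : Type := Matrix (Fin 2) (Fin 2) ℝ × (Fin 2 → ℝ)

/-- Group law on `SE(2)`: `(R₁, p₁)·(R₂, p₂) = (R₁R₂, p₁ + R₁p₂)`. -/
noncomputable def se2Mul (g h : SE2) : SE2 := (g.1 * h.1, g.2 + g.1.mulVec h.2)

/-- Identity element of `SE(2)`. -/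
noncomputable def se2One : SE2 := ((1 : Matrix (Fin 2) (Fin 2) ℝ), (0 : Fin 2 → ℝ))

/-- Given angles `θ` and translations `p` (1-indexed), `gSE2 θ p k = (R(θ k), p k)`. -/
noncomputable def gSE2 (θ : ℕ → ℝ) (p : ℕ → Fin 2 → ℝ) (k : ℕ) : SE2 := (Rot (θ k), p k)

/-- Partial product `g_{i,j} = g_i g_{i+1} ⋯ g_j` (the identity when `j < i`). -/
noncomputable def partialProd (θ : ℕ → ℝ) (p : ℕ → Fin 2 → ℝ) (i j : ℕ) : SE2 :=
  ((List.range (j + 1 - i)).map (fun t => gSE2 θ p (i + t))).foldr se2Mul se2One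

/-- Cyclic product `g^i = g_i g_{i+1} ⋯ g_l g_1 ⋯ g_{i-1}`. -/
noncomputable def cycProd (θ : ℕ → ℝ) (p : ℕ → Fin 2 → ℝ) (l i : ℕ) : SE2 :=
  se2Mul (partialProd θ p i l) (partialProd θ p 1 (i - 1))

lemma se2Mul_assoc (a b c : SE2) : se2Mul (se2Mul a b) c = se2Mul a (se2Mul b c) := by
  simp only [se2Mul, Matrix.mul_assoc, Matrix.mulVec_add, Matrix.mulVec_mulVec, add_assoc]

lemma se2Mul_one (a : SE2) : se2Mul a se2One = a := by
  simp [se2Mul, se2One]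

lemma one_se2Mul (a : SE2) : se2Mul se2One a = a := by
  simp [se2Mul, se2One]

lemma se2_foldr_append (L1 L2 : List SE2) :
    (L1 ++ L2).foldr se2Mul se2One =
      se2Mul (L1.foldr se2Mul se2One) (L2.foldr se2Mul se2One) := by
  induction L1 with
  | nil => simp [one_se2Mul]
  | cons a L ih => simp [ih, se2Mul_assoc]

lemma partialProd_split (θ : ℕ → ℝ) (p : ℕ → Fin 2 → ℝ) (i m j : ℕ)
    (h1 : i ≤ m + 1) (h2 : m ≤ j) :
    partialProd θ p i j = se2Mul (partialProd θ p i m) (partialProd θ p (m + 1) j) := by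
  unfold partialProd
  have hsplit : j + 1 - i = (m + 1 - i) + (j + 1 - (m + 1)) := by omega
  rw [hsplit, List.range_add, List.map_append, se2_foldr_append]
  congr 2
  rw [List.map_map]
  apply List.map_congr_left
  intro t ht
  show gSE2 θ p (i + (m + 1 - i + t)) = gSE2 θ p (m + 1 + t)
  congr 1
  omega

lemma Rot_zero : Rot 0 = 1 := by
  ext i j
  fin_cases i <;> fin_cases j <;>
    simp [Rot, Matrix.one_apply]

lemma Rot_add (a b : ℝ) : Rot (a + b) = Rot a * Rot b := by
  ext i j
  fin_cases i <;> fin_cases j <;>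
    simp [Rot, Matrix.mul_apply, Fin.sum_univ_two, Real.cos_add, Real.sin_add] <;> ring

lemma partialProd_fst (θ : ℕ → ℝ) (p : ℕ → Fin 2 → ℝ) (i j : ℕ) :
    (partialProd θ p i j).1 = Rot (∑ t ∈ Finset.range (j + 1 - i), θ (i + t)) := by
  unfold partialProd
  generalize (j + 1 - i) = n
  induction n generalizing i with
  | zero => simp [se2One, Rot_zero]
  | succ n ih =>
      rw [List.range_succ_eq_map, List.map_cons, List.map_map]
      have : (fun t => gSE2 θ p (i + Nat.succ t)) = fun t => gSE2 θ p ((i + 1) + t) := by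
        funext t; congr 1; omega
      show (se2Mul (gSE2 θ p (i + 0))
        ((List.map ((fun t => gSE2 θ p (i + t)) ∘ Nat.succ) (List.range n)).foldr se2Mul se2One)).1
          = _
      have hcomp : ((fun t => gSE2 θ p (i + t)) ∘ Nat.succ) = fun t => gSE2 θ p ((i + 1) + t) := by
        funext t; simp only [Function.comp]; congr 1; omega
      rw [hcomp]
      have h2 : (se2Mul (gSE2 θ p (i + 0))
          ((List.map (fun t => gSE2 θ p ((i + 1) + t)) (List.range n)).foldr se2Mul se2One)).1
          = Rot (θ (i + 0)) *
            ((List.map (fun t => gSE2 θ p ((i + 1) + t)) (List.range n)).foldr se2Mul se2One).1 :=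
        rfl
      have hs : ∑ t ∈ Finset.range (n + 1), θ (i + t)
          = θ (i + 0) + ∑ t ∈ Finset.range n, θ ((i + 1) + t) := by
        rw [Finset.sum_range_succ', add_comm]
        congr 1
        apply Finset.sum_congr rfl; intro t ht; congr 1; omega
      rw [h2, ih (i + 1), ← Rot_add, hs]

lemma sum_range_add' (f : ℕ → ℝ) (m n : ℕ) :
    ∑ t ∈ Finset.range (m + n), f t
      = (∑ t ∈ Finset.range m, f t) + ∑ t ∈ Finset.range n, f (m + t) := by
  induction n with
  | zero => simp
  | succ n ih =>
      rw [← Nat.add_assoc, Finset.sum_range_succ, ih, Finset.sum_range_succ, add_assoc]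

lemma norm_rot_mulVec (a : ℝ) (v : Fin 2 → ℝ) :
    ‖(WithLp.equiv 2 (Fin 2 → ℝ)).symm ((Rot a).mulVec v)‖ =
      ‖(WithLp.equiv 2 (Fin 2 → ℝ)).symm v‖ := by
  have h1 : ∀ w : Fin 2 → ℝ, ‖(WithLp.equiv 2 (Fin 2 → ℝ)).symm w‖
      = Real.sqrt (w 0 ^ 2 + w 1 ^ 2) := by
    intro w
    rw [EuclideanSpace.norm_eq]
    simp [Fin.sum_univ_two, WithLp.equiv_symm_apply, PiLp.toLp_apply, sq_abs]
  rw [h1, h1]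
  congr 1
  simp [Rot, Matrix.mulVec, dotProduct, Fin.sum_univ_two, Matrix.vecHead, Matrix.vecTail]
  nlinarith [Real.sin_sq_add_cos_sq a]

lemma sum_Icc_one (θ : ℕ → ℝ) (l : ℕ) :
    ∑ k ∈ Finset.Icc 1 l, θ k = ∑ t ∈ Finset.range l, θ (1 + t) := by
  induction l with
  | zero => simp
  | succ l ih =>
      rw [Finset.sum_Icc_succ_top (by omega), ih, Finset.sum_range_succ, Nat.add_comm 1 l]

lemma key_conj (l : ℕ) (θ : ℕ → ℝ) (p : ℕ → Fin 2 → ℝ)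
    (hrot : Rot (∑ k ∈ Finset.Icc 1 l, θ k) = 1)
    (i j : ℕ) (hi : 1 ≤ i) (hij : i < j) (hjl : j ≤ l) :
    (cycProd θ p l i).2 = (partialProd θ p i (j - 1)).1.mulVec (cycProd θ p l j).2 := by
  set A := partialProd θ p i (j - 1) with hA
  set B := partialProd θ p j l with hB
  set C := partialProd θ p 1 (i - 1) with hC
  have hAB : partialProd θ p i l = se2Mul A B := by
    have := partialProd_split θ p i (j - 1) l (by omega) (by omega)
    rwa [show j - 1 + 1 = j by omega] at this
  have hCA : partialProd θ p 1 (j - 1) = se2Mul C A := by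
    have := partialProd_split θ p 1 (i - 1) (j - 1) (by omega) (by omega)
    rwa [show i - 1 + 1 = i by omega] at this
  -- total rotation is 1
  have hsum : ∑ k ∈ Finset.Icc 1 l, θ k = ∑ t ∈ Finset.range l, θ (1 + t) :=
    sum_Icc_one θ l
  have hone : A.1 * (B.1 * C.1) = 1 := by
    rw [hA, hB, hC, partialProd_fst, partialProd_fst, partialProd_fst, ← Rot_add, ← Rot_add]
    have hl' : l = (i - 1) + ((j - i) + (l + 1 - j)) := by omega
    have hsplit : ∑ t ∈ Finset.range l, θ (1 + t)
        = (∑ t ∈ Finset.range (i - 1), θ (1 + t))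
          + ((∑ t ∈ Finset.range (j - i), θ (1 + (i - 1 + t)))
            + ∑ t ∈ Finset.range (l + 1 - j), θ (1 + (i - 1 + (j - i + t)))) := by
      conv_lhs => rw [hl']
      rw [sum_range_add' (fun t => θ (1 + t)) (i - 1) ((j - i) + (l + 1 - j)),
        sum_range_add' (fun t => θ (1 + (i - 1 + t))) (j - i) (l + 1 - j)]
    have e1 : ∑ t ∈ Finset.range (j - 1 + 1 - i), θ (i + t)
        = ∑ t ∈ Finset.range (j - i), θ (1 + (i - 1 + t)) := by
      rw [show j - 1 + 1 - i = j - i by omega]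
      apply Finset.sum_congr rfl; intro t ht; congr 1; omega
    have e2 : ∑ t ∈ Finset.range (l + 1 - j), θ (j + t)
        = ∑ t ∈ Finset.range (l + 1 - j), θ (1 + (i - 1 + (j - i + t))) := by
      apply Finset.sum_congr rfl; intro t ht; congr 1; omega
    have e3 : ∑ t ∈ Finset.range (i - 1 + 1 - 1), θ (1 + t)
        = ∑ t ∈ Finset.range (i - 1), θ (1 + t) := by
      rw [show i - 1 + 1 - 1 = i - 1 by omega]
    rw [e1, e2, e3,
      show (∑ t ∈ Finset.range (j - i), θ (1 + (i - 1 + t)))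
          + ((∑ t ∈ Finset.range (l + 1 - j), θ (1 + (i - 1 + (j - i + t))))
            + ∑ t ∈ Finset.range (i - 1), θ (1 + t))
        = (∑ t ∈ Finset.range (i - 1), θ (1 + t))
          + ((∑ t ∈ Finset.range (j - i), θ (1 + (i - 1 + t)))
            + ∑ t ∈ Finset.range (l + 1 - j), θ (1 + (i - 1 + (j - i + t)))) from by ring,
      ← hsplit, ← hsum]
    exact hrot
  have hcyc_i : cycProd θ p l i = se2Mul A (se2Mul B C) := by
    rw [cycProd, hAB, ← hC, se2Mul_assoc]
  have hcyc_j : cycProd θ p l j = se2Mul B (se2Mul C A) := by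
    rw [cycProd, hCA, ← hB]
  rw [hcyc_i, hcyc_j]
  simp only [se2Mul, Matrix.mulVec_add, Matrix.mulVec_mulVec]
  rw [hone, Matrix.one_mulVec]
  abel

theorem translation_gait_invariance (l : ℕ) (hl : 1 ≤ l) (θ : ℕ → ℝ) (p : ℕ → Fin 2 → ℝ)
    (hrot : Rot (∑ k ∈ Finset.Icc 1 l, θ k) = 1) :
    (∀ i j, 1 ≤ i → i < j → j ≤ l →
      (cycProd θ p l i).2 = (partialProd θ p i (j - 1)).1.mulVec (cycProd θ p l j).2) ∧
    (∀ i j, 1 ≤ i → i ≤ l → 1 ≤ j → j ≤ l →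
      ‖(WithLp.equiv 2 (Fin 2 → ℝ)).symm (cycProd θ p l i).2‖ =
        ‖(WithLp.equiv 2 (Fin 2 → ℝ)).symm (cycProd θ p l j).2‖) := by
  constructor
  · intro i j hi hij hjl
    exact key_conj l θ p hrot i j hi hij hjl
  · have main : ∀ i j, 1 ≤ i → i < j → j ≤ l →
        ‖(WithLp.equiv 2 (Fin 2 → ℝ)).symm (cycProd θ p l i).2‖ =
          ‖(WithLp.equiv 2 (Fin 2 → ℝ)).symm (cycProd θ p l j).2‖ := by
      intro i j hi hij hjl
      rw [key_conj l θ p hrot i j hi hij hjl, partialProd_fst, norm_rot_mulVec]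
    intro i j hi hil hj hjl
    rcases lt_trichotomy i j with h | h | h
    · exact main i j hi h hjl
    · rw [h]
    · exact (main j i hj h hil).symm
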